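/- arXiv:cond-mat/0603685 — 6 statements merged into one kernel-verified Lean document; each statement's English description precedes it below -/
import Mathlib

section
/- For all a, b ∈ {1, …, n}, the matrix element Q_{ab} of the Parisi matrix depends only on the ultrametric norm of the difference l(a) − l(b) in G: Q_{ab} = q(|l(a) − l(b)|), where q is the function with q(m_i) = q_i for i = 1, …, k and q(0) = 0, and l : {1, …, n} → G is the inverse of the enumeration map. -/
lemma ceil_aux (M r s : ℕ) (hM : 0 < M) (hr : r < M) :
    ⌈((1 + r + M * s : ℕ) : ℚ) / (M : ℚ)⌉ = (s : ℤ) + 1 := by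
  have hM' : (0:ℚ) < M := by exact_mod_cast hM
  have hr' : (r:ℚ) + 1 ≤ M := by exact_mod_cast hr
  rw [Int.ceil_eq_iff]
  constructor
  · rw [lt_div_iff₀ hM']
    push_cast
    nlinarith
  · rw [div_le_iff₀ hM']
    push_cast
    nlinarith



/-- Let `k ≥ 1`, `p₁, …, p_k ≥ 2`, `m₀ = 1`, `m_i = p₁⋯p_i` (0-based encoding:
`m i = ∏_{j < i} p j`), `n = m k`, and `G = ∏_{i=1}^k ℤ/p_iℤ`.  The
enumeration map `l⁻¹ : G → {1, …, n}` sends `x` to `1 + Σ x_i m_{i-1}`, and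
`l` is its inverse.  The norm is `|x| = m_i` for `i` the largest index with
`x_i ≠ 0`, `|0| = 0`.  Given real parameters `q₁, …, q_k`, the Parisi matrix
has `Q_{aa} = 0` and, for `a ≠ b`, `Q_{ab} = q_i` where `i` is the index with
`⌈a/m_{i-1}⌉ ≠ ⌈b/m_{i-1}⌉` and `⌈a/m_i⌉ = ⌈b/m_i⌉`.  Then for all
`a, b ∈ {1, …, n}`, `Q_{ab} = q(|l(a) − l(b)|)` where `q(m_i) = q_i` and
`q(0) = 0`. -/
theorem parisi_matrix_ultrametric_parameterization
    (k : ℕ) (hk : 1 ≤ k) (p : Fin k → ℕ) (hp : ∀ i, 2 ≤ p i)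
    (m : ℕ → ℕ)
    (hm : ∀ i : ℕ, m i = ∏ j ∈ Finset.univ.filter (fun j : Fin k => (j : ℕ) < i), p j)
    (n : ℕ) (hn : n = m k)
    (linv : (∀ i : Fin k, ZMod (p i)) → ℕ)
    (hlinv : ∀ x, linv x = 1 + ∑ i : Fin k, (x i).val * m i)
    (l : ℕ → ∀ i : Fin k, ZMod (p i))
    (hl₁ : ∀ x, l (linv x) = x)
    (hl₂ : ∀ a ∈ Finset.Icc 1 n, linv (l a) = a)
    (nrm : (∀ i : Fin k, ZMod (p i)) → ℕ)
    (hnrm0 : nrm 0 = 0)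
    (hnrm : ∀ (x : ∀ i : Fin k, ZMod (p i)) (i : Fin k),
      x i ≠ 0 → (∀ j : Fin k, x j ≠ 0 → (j : ℕ) ≤ (i : ℕ)) →
        nrm x = m ((i : ℕ) + 1))
    (qv : Fin k → ℝ)
    (Q : ℕ → ℕ → ℝ)
    (hQdiag : ∀ a : ℕ, Q a a = 0)
    (hQ : ∀ a b : ℕ, a ∈ Finset.Icc 1 n → b ∈ Finset.Icc 1 n → a ≠ b →
      ∀ i : Fin k,
        ⌈(a : ℚ) / (m (i : ℕ) : ℚ)⌉ ≠ ⌈(b : ℚ) / (m (i : ℕ) : ℚ)⌉ →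
        ⌈(a : ℚ) / (m ((i : ℕ) + 1) : ℚ)⌉ = ⌈(b : ℚ) / (m ((i : ℕ) + 1) : ℚ)⌉ →
          Q a b = qv i) :
    ∀ a ∈ Finset.Icc 1 n, ∀ b ∈ Finset.Icc 1 n,
      (nrm (l a - l b) = 0 → Q a b = 0) ∧
      (∀ i : Fin k, nrm (l a - l b) = m ((i : ℕ) + 1) → Q a b = qv i) := by
  classical
  haveI inst : ∀ i : Fin k, NeZero (p i) := fun i => ⟨by have := hp i; omega⟩
  have hmpos : ∀ t, 0 < m t := fun t => by
    rw [hm]; exact Finset.prod_pos (fun i _ => by have := hp i; omega)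
  have hmsucc : ∀ t (ht : t < k), m (t + 1) = m t * p ⟨t, ht⟩ := by
    intro t ht
    rw [hm, hm, show (Finset.univ.filter (fun j : Fin k => (j : ℕ) < t + 1)) =
        insert ⟨t, ht⟩ (Finset.univ.filter (fun j : Fin k => (j : ℕ) < t)) by
      ext j; simp [Fin.ext_iff]; omega]
    rw [Finset.prod_insert (by simp), mul_comm]
  have hmono : ∀ t, t ≤ k → ∀ s, s < t → m s < m t := by
    intro t
    induction t with
    | zero => omega
    | succ t ih =>
      intro ht s hs
      have htk : t < k := by omega
      have h1 : m t < m (t + 1) := by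
        rw [hmsucc t htk]
        have := hp ⟨t, htk⟩
        nlinarith [hmpos t]
      rcases Nat.lt_succ_iff_lt_or_eq.mp hs with h | h
      · exact lt_trans (ih (by omega) s h) h1
      · subst h; exact h1
  have hdiv : ∀ (t : ℕ) (j : Fin k), t ≤ (j : ℕ) →
      m t * ∏ u ∈ Finset.univ.filter (fun u : Fin k => t ≤ (u : ℕ) ∧ (u : ℕ) < (j : ℕ)), p u
        = m (j : ℕ) := by
    intro t j htj
    have hset : (Finset.univ.filter (fun u : Fin k => (u : ℕ) < (j : ℕ))) =
        (Finset.univ.filter (fun u : Fin k => (u : ℕ) < t)) ∪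
        (Finset.univ.filter (fun u : Fin k => t ≤ (u : ℕ) ∧ (u : ℕ) < (j : ℕ))) := by
      ext u; simp; omega
    have hdisj : Disjoint (Finset.univ.filter (fun u : Fin k => (u : ℕ) < t))
        (Finset.univ.filter (fun u : Fin k => t ≤ (u : ℕ) ∧ (u : ℕ) < (j : ℕ))) := by
      rw [Finset.disjoint_left]; intro u hu hu'; simp at hu hu'; omega
    rw [hm (j : ℕ), hset, Finset.prod_union hdisj, hm t]
  have hRlt : ∀ t : ℕ, t ≤ k → ∀ x : (∀ i : Fin k, ZMod (p i)),
      (∑ j ∈ Finset.univ.filter (fun j : Fin k => (j : ℕ) < t), (x j).val * m (j : ℕ)) < m t := by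
    intro t
    induction t with
    | zero =>
      intro _ x
      rw [show (Finset.univ.filter (fun j : Fin k => (j : ℕ) < 0)) = ∅ by ext j; simp]
      simpa using hmpos 0
    | succ t ih =>
      intro ht x
      have htk : t < k := by omega
      rw [show (Finset.univ.filter (fun j : Fin k => (j : ℕ) < t + 1)) =
          insert ⟨t, htk⟩ (Finset.univ.filter (fun j : Fin k => (j : ℕ) < t)) by
        ext j; simp [Fin.ext_iff]; omega]
      rw [Finset.sum_insert (by simp), hmsucc t htk]
      have h1 : (x ⟨t, htk⟩).val < p ⟨t, htk⟩ := ZMod.val_lt _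
      have h2 := ih (by omega) x
      nlinarith [hmpos t]
  have hkey : ∀ a ∈ Finset.Icc 1 n, ∀ t : ℕ, t ≤ k →
      ⌈(a : ℚ) / (m t : ℚ)⌉ = ((∑ j ∈ Finset.univ.filter (fun j : Fin k => t ≤ (j : ℕ)),
        (l a j).val * ∏ u ∈ Finset.univ.filter
          (fun u : Fin k => t ≤ (u : ℕ) ∧ (u : ℕ) < (j : ℕ)), p u : ℕ) : ℤ) + 1 := by
    intro a ha t ht
    have ha' : a = 1 + ∑ i : Fin k, (l a i).val * m (i : ℕ) := by
      rw [← hlinv (l a), hl₂ a ha]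
    have hsplit : (Finset.univ : Finset (Fin k)) =
        (Finset.univ.filter (fun j : Fin k => (j : ℕ) < t)) ∪
        (Finset.univ.filter (fun j : Fin k => t ≤ (j : ℕ))) := by
      ext j; simp; omega
    have hdisj : Disjoint (Finset.univ.filter (fun j : Fin k => (j : ℕ) < t))
        (Finset.univ.filter (fun j : Fin k => t ≤ (j : ℕ))) := by
      rw [Finset.disjoint_left]; intro u hu hu'; simp at hu hu'; omega
    have hsum : ∀ x : (∀ i : Fin k, ZMod (p i)),
        (∑ i : Fin k, (x i).val * m (i : ℕ)) =
        (∑ j ∈ Finset.univ.filter (fun j : Fin k => (j : ℕ) < t), (x j).val * m (j : ℕ)) +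
        m t * (∑ j ∈ Finset.univ.filter (fun j : Fin k => t ≤ (j : ℕ)),
          (x j).val * ∏ u ∈ Finset.univ.filter
            (fun u : Fin k => t ≤ (u : ℕ) ∧ (u : ℕ) < (j : ℕ)), p u) := by
      intro x
      conv_lhs => rw [hsplit]
      rw [Finset.sum_union hdisj, Finset.mul_sum]
      congr 1
      apply Finset.sum_congr rfl
      intro j hj
      simp only [Finset.mem_filter] at hj
      rw [← hdiv t j hj.2]; ring
    have hdecomp : a = 1 + (∑ j ∈ Finset.univ.filter (fun j : Fin k => (j : ℕ) < t),
          (l a j).val * m (j : ℕ)) +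
        m t * (∑ j ∈ Finset.univ.filter (fun j : Fin k => t ≤ (j : ℕ)),
          (l a j).val * ∏ u ∈ Finset.univ.filter
            (fun u : Fin k => t ≤ (u : ℕ) ∧ (u : ℕ) < (j : ℕ)), p u) := by
      conv_lhs => rw [ha']
      rw [hsum (l a)]; ring
    conv_lhs => rw [hdecomp]
    exact ceil_aux (m t) _ _ (hmpos t) (hRlt t ht (l a))
  intro a ha b hb
  have hmaxlem : l a - l b ≠ 0 → ∃ i : Fin k, (l a - l b) i ≠ 0 ∧
      (∀ j : Fin k, (l a - l b) j ≠ 0 → (j : ℕ) ≤ (i : ℕ)) := by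
    intro hxne
    obtain ⟨i0, hi0⟩ := Function.ne_iff.mp hxne
    have hne : (Finset.univ.filter (fun i : Fin k => (l a - l b) i ≠ 0)).Nonempty :=
      ⟨i0, by simpa using hi0⟩
    refine ⟨(Finset.univ.filter (fun i : Fin k => (l a - l b) i ≠ 0)).max' hne, ?_, ?_⟩
    · have := Finset.max'_mem _ hne; simpa using this
    · intro j hj
      exact Finset.le_max' _ j (by simpa using hj)
  constructor
  · intro h0
    by_cases hab : a = b
    · subst hab; exact hQdiag a
    · exfalso
      have hxne : l a - l b ≠ 0 := by
        intro h
        apply hab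
        have hlab : l a = l b := sub_eq_zero.mp h
        rw [← hl₂ a ha, ← hl₂ b hb, hlab]
      obtain ⟨i, hi, hmax⟩ := hmaxlem hxne
      have := hnrm _ i hi hmax
      rw [h0] at this
      exact absurd this.symm (hmpos _).ne'
  · intro i hi
    have hxne : l a - l b ≠ 0 := by
      intro h
      rw [h, hnrm0] at hi
      exact absurd hi.symm (hmpos _).ne'
    obtain ⟨j, hj, hmax⟩ := hmaxlem hxne
    have hnj := hnrm _ j hj hmax
    rw [hi] at hnj
    have hij : i = j := by
      rcases lt_trichotomy ((i : ℕ)) ((j : ℕ)) with h | h | h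
      · exact absurd hnj (hmono ((j : ℕ) + 1) j.isLt ((i : ℕ) + 1) (by omega)).ne
      · exact Fin.ext h
      · exact absurd hnj.symm (hmono ((i : ℕ) + 1) i.isLt ((j : ℕ) + 1) (by omega)).ne
    subst hij
    have hab : a ≠ b := by
      intro h
      apply hxne
      rw [h, sub_self]
    have hik : (i : ℕ) ≤ k := le_of_lt i.isLt
    have hik1 : (i : ℕ) + 1 ≤ k := i.isLt
    have htaileq : ∀ j : Fin k, (i : ℕ) < (j : ℕ) → l a j = l b j := by
      intro j hj'
      by_contra h
      have : (l a - l b) j ≠ 0 := sub_ne_zero.mpr h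
      exact absurd (hmax j this) (not_le.mpr hj')
    apply hQ a b ha hb hab i
    · rw [hkey a ha (i : ℕ) hik, hkey b hb (i : ℕ) hik]
      intro hEq
      have hEq' : (∑ j ∈ Finset.univ.filter (fun j : Fin k => (i : ℕ) ≤ (j : ℕ)),
          (l a j).val * ∏ u ∈ Finset.univ.filter
            (fun u : Fin k => (i : ℕ) ≤ (u : ℕ) ∧ (u : ℕ) < (j : ℕ)), p u) =
          (∑ j ∈ Finset.univ.filter (fun j : Fin k => (i : ℕ) ≤ (j : ℕ)),
          (l b j).val * ∏ u ∈ Finset.univ.filter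
            (fun u : Fin k => (i : ℕ) ≤ (u : ℕ) ∧ (u : ℕ) < (j : ℕ)), p u) := by
        exact_mod_cast add_right_cancel hEq
      have hins : (Finset.univ.filter (fun j : Fin k => (i : ℕ) ≤ (j : ℕ))) =
          insert i (Finset.univ.filter (fun j : Fin k => (i : ℕ) < (j : ℕ))) := by
        ext j; simp [Fin.ext_iff]; omega
      rw [hins, Finset.sum_insert (by simp), Finset.sum_insert (by simp)] at hEq'
      have htails : (∑ j ∈ Finset.univ.filter (fun j : Fin k => (i : ℕ) < (j : ℕ)),
          (l a j).val * ∏ u ∈ Finset.univ.filter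
            (fun u : Fin k => (i : ℕ) ≤ (u : ℕ) ∧ (u : ℕ) < (j : ℕ)), p u) =
          (∑ j ∈ Finset.univ.filter (fun j : Fin k => (i : ℕ) < (j : ℕ)),
          (l b j).val * ∏ u ∈ Finset.univ.filter
            (fun u : Fin k => (i : ℕ) ≤ (u : ℕ) ∧ (u : ℕ) < (j : ℕ)), p u) := by
        apply Finset.sum_congr rfl
        intro j hj'
        simp only [Finset.mem_filter] at hj'
        rw [htaileq j hj'.2]
      rw [htails] at hEq'
      have hC : (∏ u ∈ Finset.univ.filter
          (fun u : Fin k => (i : ℕ) ≤ (u : ℕ) ∧ (u : ℕ) < (i : ℕ)), p u) = 1 := by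
        rw [show (Finset.univ.filter
            (fun u : Fin k => (i : ℕ) ≤ (u : ℕ) ∧ (u : ℕ) < (i : ℕ))) = ∅ by
          ext u; simp]
        simp
      rw [hC, mul_one, mul_one] at hEq'
      have hval : (l a i).val = (l b i).val := by omega
      have : l a i = l b i := ZMod.val_injective _ hval
      exact hj (by simp [sub_eq_zero, this])
    · rw [hkey a ha ((i : ℕ) + 1) hik1, hkey b hb ((i : ℕ) + 1) hik1]
      have hs : (∑ j ∈ Finset.univ.filter (fun j : Fin k => (i : ℕ) + 1 ≤ (j : ℕ)),
          (l a j).val * ∏ u ∈ Finset.univ.filter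
            (fun u : Fin k => (i : ℕ) + 1 ≤ (u : ℕ) ∧ (u : ℕ) < (j : ℕ)), p u) =
          (∑ j ∈ Finset.univ.filter (fun j : Fin k => (i : ℕ) + 1 ≤ (j : ℕ)),
          (l b j).val * ∏ u ∈ Finset.univ.filter
            (fun u : Fin k => (i : ℕ) + 1 ≤ (u : ℕ) ∧ (u : ℕ) < (j : ℕ)), p u) := by
        apply Finset.sum_congr rfl
        intro j hj'
        simp only [Finset.mem_filter] at hj'
        rw [htaileq j (by omega)]
      rw [hs]
end

section
/- Let L ∈ S be a non-minimal vertex and I ∈ S_min with I < L. Then Σ_{J ∈ S_min : sup(I, J) = L} μ(J) = μ(L)(1 − p_L⁻¹). -/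
open scoped Classical

/-!
The minimal vertices below `L` split into those below the child `c` of `L` on the way to `I`
and the rest; a minimal `J ≤ L` has `I ⊔ J = L` exactly when it is not below `c`, because the
children of `L` have disjoint down-sets (up-sets are chains). Since `μ` of a vertex is the sum of
`μ` over its children, the minimal vertices below any `M` carry total weight `μ M`, so the sum
is `μ L - μ c = μ L (1 - p_L⁻¹)`.
-/

open Finset

namespace DirectedTree

lemma eq_of_covBy_of_le_of_le {S : Type*} [PartialOrder S]
    (hchain : ∀ x y z : S, x ≤ y → x ≤ z → y ≤ z ∨ z ≤ y)
    {x c c' M : S} (hc : c ⋖ M) (hc' : c' ⋖ M) (hxc : x ≤ c) (hxc' : x ≤ c') : c = c' := by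
  rcases hchain x c c' hxc hxc' with h | h
  · exact h.eq_of_not_lt fun hlt => hc.2 hlt hc'.1
  · exact (h.eq_of_not_lt fun hlt => hc'.2 hlt hc.1).symm

variable {S : Type*} [Fintype S]

section PartialOrder

variable [PartialOrder S]

noncomputable def children (M : S) : Finset S := univ.filter (· ⋖ M)

noncomputable def minBelow (M : S) : Finset S := univ.filter fun J => IsMin J ∧ J ≤ M

@[simp] lemma mem_children {c M : S} : c ∈ children M ↔ c ⋖ M := by simp [children]

@[simp] lemma mem_minBelow {J M : S} : J ∈ minBelow M ↔ IsMin J ∧ J ≤ M := by simp [minBelow]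

lemma minBelow_mono {M N : S} (h : M ≤ N) : minBelow M ⊆ minBelow N := fun J hJ => by
  rw [mem_minBelow] at hJ ⊢
  exact ⟨hJ.1, hJ.2.trans h⟩

lemma minBelow_eq_biUnion_children {M : S} (hM : ¬IsMin M) :
    minBelow M = (children M).biUnion minBelow := by
  ext J
  simp only [mem_minBelow, mem_biUnion, mem_children]
  constructor
  · rintro ⟨hJ, hJM⟩
    obtain ⟨c, hJc, hc⟩ := exists_le_covBy_of_lt (hJM.lt_of_ne fun h => hM (h ▸ hJ))
    exact ⟨c, hc, hJ, hJc⟩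
  · rintro ⟨c, hc, hJ, hJc⟩
    exact ⟨hJ, hJc.trans hc.le⟩

lemma pairwiseDisjoint_minBelow_children
    (hchain : ∀ x y z : S, x ≤ y → x ≤ z → y ≤ z ∨ z ≤ y) (M : S) :
    (children M : Set S).PairwiseDisjoint minBelow := by
  intro c hc c' hc' hne
  refine Finset.disjoint_left.2 fun J hJc hJc' => hne ?_
  rw [mem_minBelow] at hJc hJc'
  exact eq_of_covBy_of_le_of_le hchain (mem_children.1 hc) (mem_children.1 hc') hJc.2 hJc'.2

lemma sum_minBelow_eq (hchain : ∀ x y z : S, x ≤ y → x ≤ z → y ≤ z ∨ z ≤ y) {μ : S → ℝ}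
    (hμ : ∀ M : S, ¬IsMin M → ∑ c ∈ children M, μ c = μ M) (M : S) :
    ∑ J ∈ minBelow M, μ J = μ M := by
  induction M using WellFoundedLT.induction with
  | ind M ih =>
    by_cases hM : IsMin M
    · have hsingle : minBelow M = {M} := by
        ext J
        simp only [mem_minBelow, mem_singleton]
        exact ⟨fun h => le_antisymm h.2 (hM h.2), by rintro rfl; exact ⟨hM, le_rfl⟩⟩
      rw [hsingle, sum_singleton]
    · rw [minBelow_eq_biUnion_children hM,
        sum_biUnion (pairwiseDisjoint_minBelow_children hchain M), ← hμ M hM]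
      exact sum_congr rfl fun c hc => ih c (mem_children.1 hc).lt

lemma sum_children_eq_of_card {p : S → ℕ} {μ : S → ℝ}
    (hp : ∀ L : S, ¬IsMin L → 2 ≤ p L)
    (hcard : ∀ L : S, ¬IsMin L → (children L).card = p L)
    (hμ : ∀ L J : S, J ⋖ L → μ J = μ L / p L) (M : S) (hM : ¬IsMin M) :
    ∑ c ∈ children M, μ c = μ M := by
  have hpM : (p M : ℝ) ≠ 0 := by have := hp M hM; positivity
  rw [sum_congr rfl fun c hc => hμ M c (mem_children.1 hc), sum_const, hcard M hM,
    nsmul_eq_mul, mul_div_cancel₀ _ hpM]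

end PartialOrder

lemma sup_eq_iff_le_and_not_le [SemilatticeSup S]
    (hchain : ∀ x y z : S, x ≤ y → x ≤ z → y ≤ z ∨ z ≤ y)
    {I J c L : S} (hc : c ⋖ L) (hIc : I ≤ c) :
    I ⊔ J = L ↔ J ≤ L ∧ ¬J ≤ c := by
  constructor
  · rintro rfl
    exact ⟨le_sup_right, fun hJc => hc.lt.not_ge (sup_le hIc hJc)⟩
  · rintro ⟨hJL, hJc⟩
    refine (sup_le (hIc.trans hc.le) hJL).eq_of_not_lt fun hlt => hJc ?_
    obtain ⟨c', hc'le, hc'⟩ := exists_le_covBy_of_lt hlt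
    rw [eq_of_covBy_of_le_of_le hchain hc hc' hIc (le_sup_left.trans hc'le)]
    exact le_sup_right.trans hc'le

end DirectedTree

open DirectedTree in
theorem sum_min_weights_sup_eq_general
    {S : Type*} [Fintype S] [SemilatticeSup S]
    (hchain : ∀ x y z : S, x ≤ y → x ≤ z → y ≤ z ∨ z ≤ y)
    (p : S → ℕ) (hp : ∀ L : S, ¬ IsMin L → 2 ≤ p L)
    (hcard : ∀ L : S, ¬ IsMin L →
      (Finset.univ.filter (fun J : S => J ⋖ L)).card = p L)
    (μ : S → ℝ)
    (hμ : ∀ L J : S, J ⋖ L → μ J = μ L / p L)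
    (L : S) (I : S) (hIL : I < L) :
    ∑ J ∈ Finset.univ.filter (fun J : S => IsMin J ∧ I ⊔ J = L), μ J =
      μ L * (1 - (p L : ℝ)⁻¹) := by
  obtain ⟨c, hIc, hc⟩ := exists_le_covBy_of_lt hIL
  have hfilter : univ.filter (fun J : S => IsMin J ∧ I ⊔ J = L) = minBelow L \ minBelow c := by
    ext J
    simp only [mem_filter, mem_univ, true_and, mem_sdiff, mem_minBelow,
      sup_eq_iff_le_and_not_le hchain hc hIc]
    tauto
  have hweight := sum_minBelow_eq hchain (sum_children_eq_of_card hp hcard hμ)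
  rw [hfilter, sum_sdiff_eq_sub (minBelow_mono hc.le), hweight, hweight, hμ L c hc]
  ring

/-- In a finite directed tree `S` (finite partial order with greatest element `K`,
binary suprema, totally ordered up-sets), where every non-minimal vertex `L`
has exactly `p L ≥ 2` children and the weight `μ` satisfies `μ K > 0` and
`μ J = μ L / p L` for every child `J` of `L`: if `L` is non-minimal and `I` is
a minimal vertex with `I < L`, then
`Σ_{J ∈ S_min : sup(I,J) = L} μ J = μ L (1 − p_L⁻¹)`. -/
theorem sum_min_weights_sup_eq
    {S : Type*} [Fintype S] [SemilatticeSup S]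
    (K : S) (hK : ∀ x : S, x ≤ K)
    (hchain : ∀ x y z : S, x ≤ y → x ≤ z → y ≤ z ∨ z ≤ y)
    (p : S → ℕ) (hp : ∀ L : S, ¬ IsMin L → 2 ≤ p L)
    (hcard : ∀ L : S, ¬ IsMin L →
      (Finset.univ.filter (fun J : S => J ⋖ L)).card = p L)
    (μ : S → ℝ) (hμK : 0 < μ K)
    (hμ : ∀ L J : S, J ⋖ L → μ J = μ L / p L)
    (L : S) (hL : ¬ IsMin L) (I : S) (hI : IsMin I) (hIL : I < L) :
    ∑ J ∈ Finset.univ.filter (fun J : S => IsMin J ∧ I ⊔ J = L), μ J =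
      μ L * (1 - (p L : ℝ)⁻¹) :=
  sum_min_weights_sup_eq_general hchain p hp hcard μ hμ L I hIL
end

section
/- Σ_{I, J ∈ S_min, I ≠ J} μ(I)μ(J)·T(sup(I, J)) = Σ_{J ∈ S \ S_min} T(J)·μ(J)²·(1 − p_J⁻¹). -/
open scoped Classical

/-!
By induction on the tree, `μ L` is the total weight of the leaves below `L`: the children of `L`
partition those leaves and each carries weight `μ L / p L`. Hence pairs of leaves whose supremum
lies below `L` have total weight `μ L ^ 2`. A pair whose supremum is strictly below `L` lies below
a unique common child, so the pairs with supremum exactly `L` weigh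
`μ L ^ 2 - p L * (μ L / p L) ^ 2 = μ L ^ 2 * (1 - 1 / p L)`. Two leaves are distinct exactly when
their supremum is not minimal, so grouping the pairs of distinct leaves by their supremum gives
the identity.
-/

open Finset

section FiniteTree

variable {S : Type*}

lemma IsMin.isMin_sup_iff [SemilatticeSup S] {I J : S} (hI : IsMin I) (hJ : IsMin J) :
    IsMin (I ⊔ J) ↔ I = J := by
  refine ⟨fun h => ?_, fun h => by rwa [h, sup_idem]⟩
  have hJI : J ≤ I := le_sup_right.trans (h le_sup_left)
  exact (hI hJI).antisymm hJI

lemma CovBy.eq_of_le_of_le [PartialOrder S]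
    (hchain : ∀ x y z : S, x ≤ y → x ≤ z → y ≤ z ∨ z ≤ y)
    {x A B L : S} (hA : A ⋖ L) (hB : B ⋖ L) (hxA : x ≤ A) (hxB : x ≤ B) : A = B := by
  rcases hchain x A B hxA hxB with hAB | hBA
  · exact hAB.eq_of_not_lt fun h => hA.2 h hB.lt
  · exact (hBA.eq_of_not_lt fun h => hB.2 h hA.lt).symm

variable [Fintype S] [PartialOrder S]

variable (S) in
noncomputable def leaves : Finset S := {I | IsMin I}

lemma cast_ne_zero_of_card_covBy_eq {p : S → ℕ} {L : S}
    (hcard : #({A | A ⋖ L} : Finset S) = p L) (hL : ¬ IsMin L) : (p L : ℝ) ≠ 0 := by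
  obtain ⟨x, hx⟩ := not_isMin_iff.mp hL
  obtain ⟨A, -, hA⟩ := exists_le_covBy_of_lt hx
  rw [← hcard, Nat.cast_ne_zero, ← pos_iff_ne_zero]
  exact card_pos.mpr ⟨A, by simpa using hA⟩

/-- Below a vertex `L` of a tree, everything strictly below `L` lies below exactly one child. -/
lemma sum_filter_lt_eq_sum_covBy {α M : Type*} [AddCommMonoid M]
    (hchain : ∀ x y z : S, x ≤ y → x ≤ z → y ≤ z ∨ z ≤ y)
    (t : Finset α) (s : α → S) (f : α → M) (L : S) :
    ∑ a ∈ t with s a < L, f a = ∑ A ∈ ({A | A ⋖ L} : Finset S), ∑ a ∈ t with s a ≤ A, f a := by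
  rw [← sum_biUnion]
  · congr 1
    ext a
    simp only [mem_filter, mem_biUnion, mem_univ, true_and]
    constructor
    · rintro ⟨ha, hlt⟩
      obtain ⟨A, hle, hA⟩ := exists_le_covBy_of_lt hlt
      exact ⟨A, hA, ha, hle⟩
    · rintro ⟨A, hA, ha, hle⟩
      exact ⟨ha, hle.trans_lt hA.lt⟩
  · intro A hA B hB hne
    simp only [coe_filter, mem_univ, true_and, Set.mem_ofPred_eq] at hA hB
    refine disjoint_left.mpr fun a haA haB => hne ?_
    simp only [mem_filter] at haA haB
    exact hA.eq_of_le_of_le hchain hB haA.2 haB.2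

lemma sum_covBy_comp_eq {p : S → ℕ} {μ : S → ℝ} {L : S}
    (hcard : #({A | A ⋖ L} : Finset S) = p L) (hμ : ∀ A : S, A ⋖ L → μ A = μ L / p L)
    (f : ℝ → ℝ) :
    ∑ A ∈ ({A | A ⋖ L} : Finset S), f (μ A) = p L * f (μ L / p L) := by
  rw [sum_congr rfl fun A hA => by rw [hμ A (by simpa using hA)], sum_const, hcard, nsmul_eq_mul]

lemma sum_isMin_le_eq (hchain : ∀ x y z : S, x ≤ y → x ≤ z → y ≤ z ∨ z ≤ y)
    {p : S → ℕ} (hcard : ∀ L : S, ¬ IsMin L → #({J | J ⋖ L} : Finset S) = p L)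
    {μ : S → ℝ} (hμ : ∀ L J : S, J ⋖ L → μ J = μ L / p L) (L : S) :
    ∑ I ∈ leaves S with I ≤ L, μ I = μ L := by
  induction L using WellFoundedLT.induction with
  | ind L IH =>
  by_cases hL : IsMin L
  · have hsingleton : {I ∈ leaves S | I ≤ L} = {L} := by
      ext I
      simp only [leaves, mem_filter, mem_univ, true_and, mem_singleton]
      exact ⟨fun ⟨_, hIL⟩ => hIL.antisymm (hL hIL), by rintro rfl; exact ⟨hL, le_rfl⟩⟩
    rw [hsingleton, sum_singleton]
  have hp := cast_ne_zero_of_card_covBy_eq (hcard L hL) hL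
  calc ∑ I ∈ leaves S with I ≤ L, μ I
      = ∑ I ∈ leaves S with I < L, μ I := by
        refine sum_congr (filter_congr fun I hI => ?_) fun _ _ => rfl
        simp only [leaves, mem_filter, mem_univ, true_and] at hI
        exact ⟨fun h => h.lt_of_ne (by rintro rfl; exact hL hI), le_of_lt⟩
    _ = ∑ A ∈ ({A | A ⋖ L} : Finset S), ∑ I ∈ leaves S with I ≤ A, μ I :=
        sum_filter_lt_eq_sum_covBy hchain _ (fun I => I) μ L
    _ = ∑ A ∈ ({A | A ⋖ L} : Finset S), μ A :=
        sum_congr rfl fun A hA => IH A (by simpa using hA : A ⋖ L).lt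
    _ = μ L := (sum_covBy_comp_eq (hcard L hL) (hμ L) id).trans (mul_div_cancel₀ _ hp)

end FiniteTree

section TreeWithSup

variable {S : Type*} [Fintype S] [SemilatticeSup S]

lemma sum_isMin_pairs_sup_le_eq (hchain : ∀ x y z : S, x ≤ y → x ≤ z → y ≤ z ∨ z ≤ y)
    {p : S → ℕ} (hcard : ∀ L : S, ¬ IsMin L → #({J | J ⋖ L} : Finset S) = p L)
    {μ : S → ℝ} (hμ : ∀ L J : S, J ⋖ L → μ J = μ L / p L) (L : S) :
    ∑ q ∈ leaves S ×ˢ leaves S with q.1 ⊔ q.2 ≤ L, μ q.1 * μ q.2 = μ L ^ 2 := by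
  have hprod : {q ∈ leaves S ×ˢ leaves S | q.1 ⊔ q.2 ≤ L} =
      {I ∈ leaves S | I ≤ L} ×ˢ {I ∈ leaves S | I ≤ L} := by
    ext q
    simp only [mem_filter, mem_product, sup_le_iff]
    tauto
  rw [hprod, sum_product, sq, ← sum_isMin_le_eq hchain hcard hμ L, sum_mul_sum]

lemma sum_isMin_pairs_sup_eq (hchain : ∀ x y z : S, x ≤ y → x ≤ z → y ≤ z ∨ z ≤ y)
    {p : S → ℕ} (hcard : ∀ L : S, ¬ IsMin L → #({J | J ⋖ L} : Finset S) = p L)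
    {μ : S → ℝ} (hμ : ∀ L J : S, J ⋖ L → μ J = μ L / p L) {L : S} (hL : ¬ IsMin L) :
    ∑ q ∈ leaves S ×ˢ leaves S with q.1 ⊔ q.2 = L,
      μ q.1 * μ q.2 = μ L ^ 2 * (1 - (p L : ℝ)⁻¹) := by
  have hp := cast_ne_zero_of_card_covBy_eq (hcard L hL) hL
  have hsplit : μ L ^ 2 = ∑ q ∈ leaves S ×ˢ leaves S with q.1 ⊔ q.2 = L, μ q.1 * μ q.2 +
      ∑ q ∈ leaves S ×ˢ leaves S with q.1 ⊔ q.2 < L, μ q.1 * μ q.2 := by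
    rw [← sum_isMin_pairs_sup_le_eq hchain hcard hμ L, ← sum_union
      (disjoint_filter.mpr fun q _ heq hlt => hlt.ne heq), ← filter_or]
    simp_rw [le_iff_eq_or_lt]
  have hstrict : ∑ q ∈ leaves S ×ˢ leaves S with q.1 ⊔ q.2 < L, μ q.1 * μ q.2 =
      p L * (μ L / p L) ^ 2 :=
    calc ∑ q ∈ leaves S ×ˢ leaves S with q.1 ⊔ q.2 < L, μ q.1 * μ q.2
        = ∑ A ∈ ({A | A ⋖ L} : Finset S),
            ∑ q ∈ leaves S ×ˢ leaves S with q.1 ⊔ q.2 ≤ A, μ q.1 * μ q.2 :=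
          sum_filter_lt_eq_sum_covBy hchain _ (fun q : S × S => q.1 ⊔ q.2) _ L
      _ = ∑ A ∈ ({A | A ⋖ L} : Finset S), μ A ^ 2 :=
          sum_congr rfl fun A _ => sum_isMin_pairs_sup_le_eq hchain hcard hμ A
      _ = p L * (μ L / p L) ^ 2 := sum_covBy_comp_eq (hcard L hL) (hμ L) (· ^ 2)
  rw [hstrict] at hsplit
  field_simp at hsplit ⊢
  linear_combination -hsplit

end TreeWithSup

theorem trace_replica_matrix_general
    {S : Type*} [Fintype S] [SemilatticeSup S]
    (hchain : ∀ x y z : S, x ≤ y → x ≤ z → y ≤ z ∨ z ≤ y)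
    (p : S → ℕ)
    (hcard : ∀ L : S, ¬ IsMin L →
      (Finset.univ.filter (fun J : S => J ⋖ L)).card = p L)
    (μ : S → ℝ)
    (hμ : ∀ L J : S, J ⋖ L → μ J = μ L / p L)
    (T : S → ℝ) :
    ∑ I ∈ Finset.univ.filter (fun I : S => IsMin I),
      ∑ J ∈ Finset.univ.filter (fun J : S => IsMin J ∧ J ≠ I),
        μ I * μ J * T (I ⊔ J) =
      ∑ J ∈ Finset.univ.filter (fun J : S => ¬ IsMin J),
        T J * μ J ^ 2 * (1 - (p J : ℝ)⁻¹) := by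
  calc (_ : ℝ)
      = ∑ q ∈ leaves S ×ˢ leaves S with ¬ IsMin (q.1 ⊔ q.2), μ q.1 * μ q.2 * T (q.1 ⊔ q.2) := by
        refine (sum_finset_product' _ _ _ (f := fun I J => μ I * μ J * T (I ⊔ J))
          fun q => ?_).symm
        simp only [leaves, mem_filter, mem_product, mem_univ, true_and]
        constructor
        · rintro ⟨⟨hI, hJ⟩, hsup⟩
          exact ⟨hI, hJ, fun h => hsup ((hI.isMin_sup_iff hJ).mpr h.symm)⟩
        · rintro ⟨hI, hJ, hne⟩
          exact ⟨⟨hI, hJ⟩, fun h => hne ((hI.isMin_sup_iff hJ).mp h).symm⟩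
    _ = ∑ L ∈ univ with ¬ IsMin L,
          ∑ q ∈ leaves S ×ˢ leaves S with q.1 ⊔ q.2 = L, μ q.1 * μ q.2 * T (q.1 ⊔ q.2) := by
        convert (sum_fiberwise_eq_sum_filter (leaves S ×ˢ leaves S) {L | ¬ IsMin L}
          (fun q : S × S => q.1 ⊔ q.2) _).symm using 2
        simp only [mem_filter, mem_univ, true_and]
    _ = _ := sum_congr rfl fun L hL => by
        rw [mul_assoc, ← sum_isMin_pairs_sup_eq hchain hcard hμ (by simpa using hL), mul_sum]
        refine sum_congr rfl fun q hq => ?_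
        rw [(mem_filter.mp hq).2]
        ring

/-- In a finite directed tree `S` (finite partial order with greatest element `K`,
binary suprema, totally ordered up-sets), where every non-minimal vertex `L`
has exactly `p L ≥ 2` children and the weight `μ` satisfies `μ K > 0` and
`μ J = μ L / p L` for every child `J` of `L`, and `T : S → ℝ` is arbitrary:
`Σ_{I,J ∈ S_min, I ≠ J} μ(I) μ(J) T(sup(I,J))
  = Σ_{J ∈ S \ S_min} T(J) μ(J)² (1 − p_J⁻¹)`. -/
theorem trace_replica_matrix
    {S : Type*} [Fintype S] [SemilatticeSup S]
    (K : S) (hK : ∀ x : S, x ≤ K)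
    (hchain : ∀ x y z : S, x ≤ y → x ≤ z → y ≤ z ∨ z ≤ y)
    (p : S → ℕ) (hp : ∀ L : S, ¬ IsMin L → 2 ≤ p L)
    (hcard : ∀ L : S, ¬ IsMin L →
      (Finset.univ.filter (fun J : S => J ⋖ L)).card = p L)
    (μ : S → ℝ) (hμK : 0 < μ K)
    (hμ : ∀ L J : S, J ⋖ L → μ J = μ L / p L)
    (T : S → ℝ) :
    ∑ I ∈ Finset.univ.filter (fun I : S => IsMin I),
      ∑ J ∈ Finset.univ.filter (fun J : S => IsMin J ∧ J ≠ I),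
        μ I * μ J * T (I ⊔ J) =
      ∑ J ∈ Finset.univ.filter (fun J : S => ¬ IsMin J),
        T J * μ J ^ 2 * (1 - (p J : ℝ)⁻¹) :=
  trace_replica_matrix_general hchain p hcard μ hμ T
end

section
/- Let I, J ∈ S_min with I ≠ J. Then Σ_{L ∈ S_min, L ≠ I, L ≠ J} μ(L)·T₁(sup(I, L))·T₂(sup(L, J)) = μ(sup(I, J))·(1 − 2·p_{sup(I,J)}⁻¹)·T₁(sup(I, J))·T₂(sup(I, J)) + Σ_{L : sup(I,J) < L ≤ K} μ(L)(1 − p_L⁻¹)T₁(L)T₂(L) + [Σ_{L : I < L < sup(I,J)} μ(L)(1 − p_L⁻¹)T₁(L)]·T₂(sup(I, J)) + T₁(sup(I, J))·[Σ_{L : J < L < sup(I,J)} μ(L)(1 − p_L⁻¹)T₂(L)]. -/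
/-!
In a tree the three suprema `I ⊔ L`, `J ⊔ L`, `I ⊔ J` obey the ultrametric rule: two of them
coincide and dominate the third. Hence the minimal `L ≠ I, J` fall into four classes, according
to whether `L` branches off strictly below the join `I ⊔ J` on the side of `I`, on the side of
`J`, at the join, or above it; on each class the summand only depends on the branching vertex.
Since the weights of the leaves below a vertex add up to its weight, the leaves branching off a
fixed leaf at a vertex `A` weigh `μ A - μ A / p A`; at the join two children are removed, which
gives `μ (1 - 2 / p)`.
-/

open scoped Classical

open Finset

section DirectedTree

variable {S : Type*} [SemilatticeSup S]
  (hchain : ∀ x y z : S, x ≤ y → x ≤ z → y ≤ z ∨ z ≤ y)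
include hchain

theorem sup_eq_sup_of_sup_lt_sup {a b c : S} (h : a ⊔ c < a ⊔ b) : b ⊔ c = a ⊔ b := by
  rcases hchain c (a ⊔ c) (b ⊔ c) le_sup_right le_sup_right with hac | hbc
  · exact le_antisymm (sup_le le_sup_right (le_sup_right.trans h.le))
      (sup_le (le_sup_left.trans hac) le_sup_left)
  · exact absurd (sup_le le_sup_left (le_sup_left.trans hbc)) h.not_ge

theorem sup_eq_iff_of_le_of_covBy {x c A : S} (hxc : x ≤ c) (hcA : c ⋖ A) (L : S) :
    x ⊔ L = A ↔ L ≤ A ∧ ¬ L ≤ c := by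
  constructor
  · rintro rfl
    exact ⟨le_sup_right, fun hLc => hcA.lt.not_ge (sup_le hxc hLc)⟩
  · rintro ⟨hLA, hLc⟩
    rcases hchain x c (x ⊔ L) hxc le_sup_left with hc | hc
    · refine (hcA.wcovBy.eq_or_eq hc (sup_le (hxc.trans hcA.le) hLA)).resolve_left ?_
      rintro h
      exact hLc (h ▸ le_sup_right)
    · exact absurd (le_sup_right.trans hc) hLc

theorem eq_of_covBy_of_le_of_le {x c c' A : S} (hc : c ⋖ A) (hc' : c' ⋖ A) (hxc : x ≤ c)
    (hxc' : x ≤ c') : c = c' := by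
  rcases hchain x c c' hxc hxc' with h | h
  · exact ((hc.wcovBy.eq_or_eq h hc'.le).resolve_right hc'.ne).symm
  · exact (hc'.wcovBy.eq_or_eq h hc.le).resolve_right hc.ne

end DirectedTree

theorem IsMin.lt_sup_iff_ne {S : Type*} [SemilatticeSup S] {x y : S} (hx : IsMin x) :
    x < x ⊔ y ↔ y ≠ x :=
  left_lt_sup.trans (not_congr ⟨hx.eq_of_le, fun h => h ▸ le_rfl⟩)

section Position

variable {S : Type*} [SemilatticeSup S]
  (hchain : ∀ x y z : S, x ≤ y → x ≤ z → y ≤ z ∨ z ≤ y)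
  {I J : S} (hI : IsMin I) (hJ : IsMin J) (hIJ : I ≠ J)
include hchain hI hJ hIJ

theorem ne_and_ne_iff (L : S) :
    L ≠ I ∧ L ≠ J ↔ (I < I ⊔ L ∧ I ⊔ L < I ⊔ J) ∨ (J < J ⊔ L ∧ J ⊔ L < I ⊔ J) ∨
      (I ⊔ L = I ⊔ J ∧ J ⊔ L = I ⊔ J) ∨ I ⊔ J < I ⊔ L := by
  have hIM : I < I ⊔ J := hI.lt_sup_iff_ne.2 hIJ.symm
  have hJM : J < I ⊔ J := sup_comm J I ▸ hJ.lt_sup_iff_ne.2 hIJ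
  constructor
  · rintro ⟨hLI, hLJ⟩
    by_cases heq : I ⊔ L = I ⊔ J
    · have hJL : J ⊔ L ≤ I ⊔ J := sup_le le_sup_right (heq ▸ le_sup_right)
      rcases hJL.lt_or_eq with hlt | hJL
      · exact Or.inr (Or.inl ⟨hJ.lt_sup_iff_ne.2 hLJ, hlt⟩)
      · exact Or.inr (Or.inr (Or.inl ⟨heq, hJL⟩))
    · rcases hchain I (I ⊔ L) (I ⊔ J) le_sup_left le_sup_left with h | h
      · exact Or.inl ⟨hI.lt_sup_iff_ne.2 hLI, h.lt_of_ne heq⟩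
      · exact Or.inr (Or.inr (Or.inr (h.lt_of_ne (Ne.symm heq))))
  · rintro (⟨hIL, hLM⟩ | ⟨hJL, hLM⟩ | ⟨hIL, hJL⟩ | hML) <;> refine ⟨?_, ?_⟩ <;> rintro rfl
    · exact hIL.ne (sup_idem _).symm
    · exact lt_irrefl _ hLM
    · exact hLM.ne (sup_comm _ _)
    · exact hJL.ne (sup_idem _).symm
    · exact hIM.ne ((sup_idem _).symm.trans hIL)
    · exact hJM.ne ((sup_idem _).symm.trans hJL)
    · exact lt_asymm hIM (by rwa [sup_idem] at hML)
    · exact lt_irrefl _ hML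

theorem sum_filter_ne_ne_eq [Fintype S] (f : S → ℝ) :
    ∑ L ∈ univ.filter (fun L => IsMin L ∧ L ≠ I ∧ L ≠ J), f L =
      ∑ L ∈ univ.filter (fun L => IsMin L ∧ (I < I ⊔ L ∧ I ⊔ L < I ⊔ J)), f L
      + ∑ L ∈ univ.filter (fun L => IsMin L ∧ (J < J ⊔ L ∧ J ⊔ L < I ⊔ J)), f L
      + ∑ L ∈ univ.filter (fun L => IsMin L ∧ I ⊔ L = I ⊔ J ∧ J ⊔ L = I ⊔ J), f L
      + ∑ L ∈ univ.filter (fun L => IsMin L ∧ I ⊔ J < I ⊔ L), f L := by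
  have hJ_of_lt {L : S} (h : I ⊔ L < I ⊔ J) : J ⊔ L = I ⊔ J := sup_eq_sup_of_sup_lt_sup hchain h
  have hI_of_lt {L : S} (h : J ⊔ L < I ⊔ J) : I ⊔ L = I ⊔ J := by
    rw [sup_comm I J] at h ⊢
    exact sup_eq_sup_of_sup_lt_sup hchain h
  have d₁ (L : S) (h : I < I ⊔ L ∧ I ⊔ L < I ⊔ J) : ¬((J < J ⊔ L ∧ J ⊔ L < I ⊔ J) ∨
      (I ⊔ L = I ⊔ J ∧ J ⊔ L = I ⊔ J) ∨ I ⊔ J < I ⊔ L) := by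
    rintro (h' | h' | h')
    · exact h'.2.ne (hJ_of_lt h.2)
    · exact h.2.ne h'.1
    · exact lt_asymm h.2 h'
  have d₂ (L : S) (h : J < J ⊔ L ∧ J ⊔ L < I ⊔ J) :
      ¬((I ⊔ L = I ⊔ J ∧ J ⊔ L = I ⊔ J) ∨ I ⊔ J < I ⊔ L) := by
    rintro (h' | h')
    · exact h.2.ne h'.2
    · exact h'.ne' (hI_of_lt h.2)
  have d₃ (L : S) (h : I ⊔ L = I ⊔ J ∧ J ⊔ L = I ⊔ J) : ¬ I ⊔ J < I ⊔ L :=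
    fun h' => h'.ne' h.1
  rw [← filter_filter, filter_congr fun L _ => ne_and_ne_iff hchain hI hJ hIJ L,
    filter_or, sum_union (disjoint_filter.2 fun L _ => d₁ L),
    filter_or, sum_union (disjoint_filter.2 fun L _ => d₂ L),
    filter_or, sum_union (disjoint_filter.2 fun L _ => d₃ L)]
  simp only [filter_filter]
  ring

end Position

section Leaves

variable {S : Type*} [Fintype S] [SemilatticeSup S]

noncomputable def leavesBelow (A : S) : Finset S := univ.filter fun L => IsMin L ∧ L ≤ A

theorem mem_leavesBelow {A L : S} : L ∈ leavesBelow A ↔ IsMin L ∧ L ≤ A := by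
  simp [leavesBelow]

theorem leavesBelow_mono {A B : S} (h : A ≤ B) : leavesBelow A ⊆ leavesBelow B := fun _ hL =>
  mem_leavesBelow.2 ⟨(mem_leavesBelow.1 hL).1, (mem_leavesBelow.1 hL).2.trans h⟩

theorem leavesBelow_eq_biUnion {A : S} (hA : ¬ IsMin A) :
    leavesBelow A = (univ.filter (· ⋖ A)).biUnion leavesBelow := by
  ext L
  simp only [mem_leavesBelow, mem_biUnion, mem_filter, mem_univ, true_and]
  constructor
  · rintro ⟨hL, hLA⟩
    obtain ⟨c, hLc, hcA⟩ := exists_le_covBy_of_lt (hLA.lt_of_ne fun h => hA (h ▸ hL))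
    exact ⟨c, hcA, hL, hLc⟩
  · rintro ⟨c, hcA, hL, hLc⟩
    exact ⟨hL, hLc.trans hcA.le⟩

variable (hchain : ∀ x y z : S, x ≤ y → x ≤ z → y ≤ z ∨ z ≤ y)
include hchain

theorem disjoint_leavesBelow_of_covBy {c c' A : S} (hc : c ⋖ A) (hc' : c' ⋖ A) (hne : c ≠ c') :
    Disjoint (leavesBelow c) (leavesBelow c') :=
  disjoint_left.2 fun _ hL hL' => hne <|
    eq_of_covBy_of_le_of_le hchain hc hc' (mem_leavesBelow.1 hL).2 (mem_leavesBelow.1 hL').2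

variable {p : S → ℕ} (hcard : ∀ L : S, ¬ IsMin L → (univ.filter (· ⋖ L)).card = p L)
  {μ : S → ℝ} (hμ : ∀ L J : S, J ⋖ L → μ J = μ L / p L)
include hcard hμ

theorem sum_leavesBelow (A : S) : ∑ L ∈ leavesBelow A, μ L = μ A := by
  induction A using WellFoundedLT.induction with
  | ind A ih =>
  by_cases hA : IsMin A
  · have : leavesBelow A = {A} := by
      ext L
      simp only [mem_leavesBelow, mem_singleton]
      exact ⟨fun h => hA.eq_of_le h.2, by rintro rfl; exact ⟨hA, le_rfl⟩⟩
    rw [this, sum_singleton]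
  · have hpA : (p A : ℝ) ≠ 0 := by
      obtain ⟨x, hxA⟩ := not_isMin_iff.1 hA
      obtain ⟨c, -, hcA⟩ := exists_le_covBy_of_lt hxA
      rw [← hcard A hA, Nat.cast_ne_zero, ← pos_iff_ne_zero, card_pos]
      exact ⟨c, by simpa using hcA⟩
    have hdisj : (univ.filter (· ⋖ A) : Set S).PairwiseDisjoint leavesBelow :=
      fun c hc c' hc' =>
        disjoint_leavesBelow_of_covBy hchain (by simpa using hc) (by simpa using hc')
    rw [leavesBelow_eq_biUnion hA, sum_biUnion hdisj,
      sum_congr rfl fun c hc => (ih c (mem_filter.1 hc).2.lt).trans (hμ A c (mem_filter.1 hc).2),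
      sum_const, hcard A hA, nsmul_eq_mul, mul_div_cancel₀ _ hpA]

theorem sum_filter_sup_eq {x A : S} (hxA : x < A) :
    ∑ L ∈ univ.filter (fun L => IsMin L ∧ x ⊔ L = A), μ L = μ A * (1 - (p A : ℝ)⁻¹) := by
  obtain ⟨c, hxc, hcA⟩ := exists_le_covBy_of_lt hxA
  have hset : univ.filter (fun L => IsMin L ∧ x ⊔ L = A) = leavesBelow A \ leavesBelow c := by
    ext L
    simp only [mem_filter, mem_univ, true_and, mem_sdiff, mem_leavesBelow,
      sup_eq_iff_of_le_of_covBy hchain hxc hcA]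
    tauto
  rw [hset, sum_sdiff_eq_sub (leavesBelow_mono hcA.le), sum_leavesBelow hchain hcard hμ,
    sum_leavesBelow hchain hcard hμ, hμ A c hcA]
  ring

theorem sum_filter_mul_sup {x : S} {P : S → Prop} [DecidablePred P] (hP : ∀ A, P A → x < A)
    (f : S → ℝ) :
    ∑ L ∈ univ.filter (fun L => IsMin L ∧ P (x ⊔ L)), μ L * f (x ⊔ L)
      = ∑ A ∈ univ.filter P, μ A * (1 - (p A : ℝ)⁻¹) * f A := by
  rw [← sum_fiberwise_of_maps_to (g := (x ⊔ ·)) (t := univ.filter P) (fun L hL => by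
    simp only [mem_filter, mem_univ, true_and] at hL ⊢; exact hL.2)]
  refine sum_congr rfl fun A hA => ?_
  have hfiber : (univ.filter (fun L => IsMin L ∧ P (x ⊔ L))).filter (x ⊔ · = A)
      = univ.filter (fun L => IsMin L ∧ x ⊔ L = A) := by
    ext L
    simp only [mem_filter, mem_univ, true_and]
    exact ⟨fun h => ⟨h.1.1, h.2⟩, fun h => ⟨⟨h.1, h.2 ▸ (mem_filter.1 hA).2⟩, h.2⟩⟩
  rw [sum_congr rfl fun L hL => by rw [(mem_filter.1 hL).2], ← sum_mul, hfiber,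
    sum_filter_sup_eq hchain hcard hμ (hP A (mem_filter.1 hA).2)]

variable (x y : S) (f g : S → ℝ)

theorem sum_filter_sup_lt_sup :
    ∑ L ∈ univ.filter (fun L => IsMin L ∧ (x < x ⊔ L ∧ x ⊔ L < x ⊔ y)),
        μ L * f (x ⊔ L) * g (y ⊔ L)
      = (∑ A ∈ univ.filter (fun A => x < A ∧ A < x ⊔ y), μ A * (1 - (p A : ℝ)⁻¹) * f A)
          * g (x ⊔ y) := calc
  _ = ∑ L ∈ univ.filter (fun L => IsMin L ∧ (x < x ⊔ L ∧ x ⊔ L < x ⊔ y)),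
        μ L * (f (x ⊔ L) * g (x ⊔ y)) := sum_congr rfl fun L hL => by
      rw [sup_eq_sup_of_sup_lt_sup hchain (mem_filter.1 hL).2.2.2, mul_assoc]
  _ = _ := sum_filter_mul_sup hchain hcard hμ (P := fun A => x < A ∧ A < x ⊔ y)
        (fun _ h => h.1) (f · * g (x ⊔ y))
  _ = _ := by simp only [sum_mul, mul_assoc]

theorem sum_filter_sup_eq_sup_eq (hx : x < x ⊔ y) (hy : y < x ⊔ y) :
    ∑ L ∈ univ.filter (fun L => IsMin L ∧ x ⊔ L = x ⊔ y ∧ y ⊔ L = x ⊔ y),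
        μ L * f (x ⊔ L) * g (y ⊔ L)
      = μ (x ⊔ y) * (1 - 2 * (p (x ⊔ y) : ℝ)⁻¹) * f (x ⊔ y) * g (x ⊔ y) := by
  obtain ⟨c, hxc, hc⟩ := exists_le_covBy_of_lt hx
  obtain ⟨c', hyc', hc'⟩ := exists_le_covBy_of_lt hy
  have hne : c ≠ c' := by
    rintro rfl
    exact hc.lt.not_ge (sup_le hxc hyc')
  have hset : univ.filter (fun L => IsMin L ∧ x ⊔ L = x ⊔ y ∧ y ⊔ L = x ⊔ y)
      = leavesBelow (x ⊔ y) \ (leavesBelow c ∪ leavesBelow c') := by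
    ext L
    simp only [mem_filter, mem_univ, true_and, mem_sdiff, mem_union, mem_leavesBelow,
      sup_eq_iff_of_le_of_covBy hchain hxc hc, sup_eq_iff_of_le_of_covBy hchain hyc' hc']
    tauto
  calc
    _ = (∑ L ∈ leavesBelow (x ⊔ y) \ (leavesBelow c ∪ leavesBelow c'), μ L)
          * (f (x ⊔ y) * g (x ⊔ y)) := by
      rw [← hset, sum_mul]
      exact sum_congr rfl fun L hL => by
        rw [(mem_filter.1 hL).2.2.1, (mem_filter.1 hL).2.2.2, mul_assoc]
    _ = _ := by
      rw [sum_sdiff_eq_sub (union_subset (leavesBelow_mono hc.le) (leavesBelow_mono hc'.le)),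
        sum_union (disjoint_leavesBelow_of_covBy hchain hc hc' hne)]
      simp only [sum_leavesBelow hchain hcard hμ, hμ _ _ hc, hμ _ _ hc']
      ring

theorem sum_filter_sup_lt :
    ∑ L ∈ univ.filter (fun L => IsMin L ∧ x ⊔ y < x ⊔ L), μ L * f (x ⊔ L) * g (y ⊔ L)
      = ∑ A ∈ univ.filter (x ⊔ y < ·), μ A * (1 - (p A : ℝ)⁻¹) * f A * g A := calc
  _ = ∑ L ∈ univ.filter (fun L => IsMin L ∧ x ⊔ y < x ⊔ L), μ L * (f (x ⊔ L) * g (x ⊔ L)) :=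
      sum_congr rfl fun L hL => by
        rw [sup_comm y L, sup_eq_sup_of_sup_lt_sup hchain (mem_filter.1 hL).2.2, mul_assoc]
  _ = _ := sum_filter_mul_sup hchain hcard hμ (fun _ h => le_sup_left.trans_lt h)
        (fun A => f A * g A)
  _ = _ := sum_congr rfl fun _ _ => (mul_assoc _ _ _).symm

end Leaves

theorem product_replica_matrices_off_diagonal_general
    {S : Type*} [Fintype S] [SemilatticeSup S]
    (K : S) (hK : ∀ x : S, x ≤ K)
    (hchain : ∀ x y z : S, x ≤ y → x ≤ z → y ≤ z ∨ z ≤ y)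
    (p : S → ℕ)
    (hcard : ∀ L : S, ¬ IsMin L →
      (Finset.univ.filter (fun J : S => J ⋖ L)).card = p L)
    (μ : S → ℝ)
    (hμ : ∀ L J : S, J ⋖ L → μ J = μ L / p L)
    (T₁ T₂ : S → ℝ)
    (I J : S) (hI : IsMin I) (hJ : IsMin J) (hIJ : I ≠ J) :
    ∑ L ∈ Finset.univ.filter (fun L : S => IsMin L ∧ L ≠ I ∧ L ≠ J),
        μ L * T₁ (I ⊔ L) * T₂ (L ⊔ J) =
      μ (I ⊔ J) * (1 - 2 * (p (I ⊔ J) : ℝ)⁻¹) * T₁ (I ⊔ J) * T₂ (I ⊔ J)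
      + ∑ L ∈ Finset.univ.filter (fun L : S => I ⊔ J < L ∧ L ≤ K),
          μ L * (1 - (p L : ℝ)⁻¹) * T₁ L * T₂ L
      + (∑ L ∈ Finset.univ.filter (fun L : S => I < L ∧ L < I ⊔ J),
          μ L * (1 - (p L : ℝ)⁻¹) * T₁ L) * T₂ (I ⊔ J)
      + T₁ (I ⊔ J) *
          (∑ L ∈ Finset.univ.filter (fun L : S => J < L ∧ L < I ⊔ J),
            μ L * (1 - (p L : ℝ)⁻¹) * T₂ L) := by
  have hIM : I < I ⊔ J := hI.lt_sup_iff_ne.2 hIJ.symm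
  have hJM : J < I ⊔ J := sup_comm J I ▸ hJ.lt_sup_iff_ne.2 hIJ
  have hbelowK : univ.filter (fun L => I ⊔ J < L ∧ L ≤ K) = univ.filter (I ⊔ J < ·) :=
    filter_congr fun L _ => by simp [hK]
  have hJside : ∑ L ∈ univ.filter (fun L => IsMin L ∧ (J < J ⊔ L ∧ J ⊔ L < I ⊔ J)),
      μ L * T₁ (I ⊔ L) * T₂ (J ⊔ L) = T₁ (I ⊔ J) * ∑ A ∈ univ.filter
        (fun A => J < A ∧ A < I ⊔ J), μ A * (1 - (p A : ℝ)⁻¹) * T₂ A := by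
    rw [sup_comm I J, mul_comm, ← sum_filter_sup_lt_sup hchain hcard hμ J I T₂ T₁]
    exact sum_congr rfl fun _ _ => mul_right_comm _ _ _
  rw [sum_congr rfl fun L _ => by rw [sup_comm L J], sum_filter_ne_ne_eq hchain hI hJ hIJ,
    sum_filter_sup_lt_sup hchain hcard hμ, hJside, sum_filter_sup_eq_sup_eq hchain hcard hμ _ _
    _ _ hIM hJM, sum_filter_sup_lt hchain hcard hμ, hbelowK]
  ring

/-- In a finite directed tree `S` (finite partial order with greatest element `K`,
binary suprema, totally ordered up-sets), where every non-minimal vertex `L`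
has exactly `p L ≥ 2` children and the weight `μ` satisfies `μ K > 0` and
`μ J = μ L / p L` for every child `J` of `L`, and `T₁, T₂ : S → ℝ` are
arbitrary: for minimal `I ≠ J`,
`Σ_{L ∈ S_min, L ≠ I, L ≠ J} μ(L) T₁(sup(I,L)) T₂(sup(L,J))` equals the sum of
the four terms of Lemma 4 (products of sums over the order intervals
`sup(I,J) < L ≤ K`, `I < L < sup(I,J)`, `J < L < sup(I,J)`). -/
theorem product_replica_matrices_off_diagonal
    {S : Type*} [Fintype S] [SemilatticeSup S]
    (K : S) (hK : ∀ x : S, x ≤ K)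
    (hchain : ∀ x y z : S, x ≤ y → x ≤ z → y ≤ z ∨ z ≤ y)
    (p : S → ℕ) (hp : ∀ L : S, ¬ IsMin L → 2 ≤ p L)
    (hcard : ∀ L : S, ¬ IsMin L →
      (Finset.univ.filter (fun J : S => J ⋖ L)).card = p L)
    (μ : S → ℝ) (hμK : 0 < μ K)
    (hμ : ∀ L J : S, J ⋖ L → μ J = μ L / p L)
    (T₁ T₂ : S → ℝ)
    (I J : S) (hI : IsMin I) (hJ : IsMin J) (hIJ : I ≠ J) :
    ∑ L ∈ Finset.univ.filter (fun L : S => IsMin L ∧ L ≠ I ∧ L ≠ J),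
        μ L * T₁ (I ⊔ L) * T₂ (L ⊔ J) =
      μ (I ⊔ J) * (1 - 2 * (p (I ⊔ J) : ℝ)⁻¹) * T₁ (I ⊔ J) * T₂ (I ⊔ J)
      + ∑ L ∈ Finset.univ.filter (fun L : S => I ⊔ J < L ∧ L ≤ K),
          μ L * (1 - (p L : ℝ)⁻¹) * T₁ L * T₂ L
      + (∑ L ∈ Finset.univ.filter (fun L : S => I < L ∧ L < I ⊔ J),
          μ L * (1 - (p L : ℝ)⁻¹) * T₁ L) * T₂ (I ⊔ J)
      + T₁ (I ⊔ J) *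
          (∑ L ∈ Finset.univ.filter (fun L : S => J < L ∧ L < I ⊔ J),
            μ L * (1 - (p L : ℝ)⁻¹) * T₂ L) :=
  product_replica_matrices_off_diagonal_general K hK hchain p hcard μ hμ T₁ T₂ I J hI hJ hIJ
end

section
/- Let I ∈ S_min. Then Σ_{L ∈ S_min, L ≠ I} μ(L)·T₁(sup(I, L))·T₂(sup(L, I)) = Σ_{L : I < L ≤ K} μ(L)·(1 − p_L⁻¹)·T₁(L)·T₂(L). -/
/-!
Grouping the leaves `L ≠ I` by the vertex `I ⊔ L` where they branch off from `I` turns the left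
side into a sum over the vertices `M > I`. The leaves over `M` are those below `M` but not below
the child `J` of `M` above `I`; since the leaves below any vertex carry exactly its weight (each of
its `p` children carries a `p`-th of it), their mass is `μ M - μ J = μ M (1 - 1 / p M)`.
-/

open scoped Classical
open Finset

theorem CovBy.eq_of_covBy_of_le {α : Type*} [PartialOrder α] {a b c : α}
    (ha : a ⋖ c) (hb : b ⋖ c) (hab : a ≤ b) : a = b :=
  ((ha.eq_or_eq hab hb.le).resolve_right hb.ne).symm

namespace DirectedTree

variable {S : Type*} [Fintype S] [SemilatticeSup S]

noncomputable def leavesBelow (M : S) : Finset S :=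
  univ.filter fun L => IsMin L ∧ L ≤ M

@[simp]
theorem mem_leavesBelow {L M : S} : L ∈ leavesBelow M ↔ IsMin L ∧ L ≤ M := by
  simp [leavesBelow]

theorem leavesBelow_of_isMin {M : S} (hM : IsMin M) : leavesBelow M = {M} := by
  ext L
  simp only [mem_leavesBelow, mem_singleton]
  exact ⟨fun ⟨_, hLM⟩ => le_antisymm hLM (hM hLM), by rintro rfl; exact ⟨hM, le_rfl⟩⟩

theorem leavesBelow_eq_biUnion {M : S} (hM : ¬ IsMin M) :
    leavesBelow M = (univ.filter (· ⋖ M)).biUnion leavesBelow := by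
  ext L
  simp only [mem_leavesBelow, mem_biUnion, mem_filter, mem_univ, true_and]
  constructor
  · rintro ⟨hL, hLM⟩
    obtain ⟨J, hLJ, hJM⟩ := exists_le_covBy_of_lt (hLM.lt_of_ne fun h => hM (h ▸ hL))
    exact ⟨J, hJM, hL, hLJ⟩
  · rintro ⟨J, hJM, hL, hLJ⟩
    exact ⟨hL, hLJ.trans hJM.le⟩

theorem pairwiseDisjoint_leavesBelow (hchain : ∀ x y z : S, x ≤ y → x ≤ z → y ≤ z ∨ z ≤ y)
    (M : S) : (univ.filter (· ⋖ M) : Set S).PairwiseDisjoint leavesBelow := by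
  intro J hJ J' hJ' hne
  simp only [coe_filter, mem_univ, true_and, Set.mem_ofPred_eq] at hJ hJ'
  refine disjoint_left.2 fun L hL hL' => hne ?_
  rcases hchain L J J' (mem_leavesBelow.1 hL).2 (mem_leavesBelow.1 hL').2 with h | h
  · exact hJ.eq_of_covBy_of_le hJ' h
  · exact (hJ'.eq_of_covBy_of_le hJ h).symm

theorem filter_covBy_nonempty {M : S} (hM : ¬ IsMin M) : (univ.filter (· ⋖ M)).Nonempty := by
  obtain ⟨L, hLM⟩ := not_isMin_iff.1 hM
  obtain ⟨J, -, hJM⟩ := exists_le_covBy_of_lt hLM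
  exact ⟨J, by simpa using hJM⟩

theorem sum_leavesBelow (hchain : ∀ x y z : S, x ≤ y → x ≤ z → y ≤ z ∨ z ≤ y)
    (p : S → ℕ) (hcard : ∀ L : S, ¬ IsMin L → (univ.filter (fun J : S => J ⋖ L)).card = p L)
    (μ : S → ℝ) (hμ : ∀ L J : S, J ⋖ L → μ J = μ L / p L) (M : S) :
    ∑ L ∈ leavesBelow M, μ L = μ M := by
  induction M using WellFoundedLT.induction with
  | _ M ih =>
    by_cases hM : IsMin M
    · rw [leavesBelow_of_isMin hM, sum_singleton]
    have hchild : ∀ J ∈ univ.filter (· ⋖ M), ∑ L ∈ leavesBelow J, μ L = μ M / p M := by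
      intro J hJ
      have hJM : J ⋖ M := by simpa using hJ
      rw [ih J hJM.lt, hμ M J hJM]
    have hp : (p M : ℝ) ≠ 0 := by
      rw [← hcard M hM]
      exact_mod_cast (filter_covBy_nonempty hM).card_pos.ne'
    rw [leavesBelow_eq_biUnion hM, sum_biUnion (pairwiseDisjoint_leavesBelow hchain M),
      sum_congr rfl hchild, sum_const, hcard M hM, nsmul_eq_mul, mul_div_cancel₀ _ hp]

theorem filter_sup_eq_eq_sdiff (hchain : ∀ x y z : S, x ≤ y → x ≤ z → y ≤ z ∨ z ≤ y)
    {I J M : S} (hIJ : I ≤ J) (hJM : J ⋖ M) :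
    (univ.filter (fun L : S => IsMin L ∧ L ≠ I)).filter (I ⊔ · = M)
      = leavesBelow M \ leavesBelow J := by
  ext L
  simp only [mem_filter, mem_univ, true_and, mem_sdiff, mem_leavesBelow, not_and]
  constructor
  · rintro ⟨⟨hL, -⟩, rfl⟩
    exact ⟨⟨hL, le_sup_right⟩, fun _ hLJ => hJM.lt.not_ge (sup_le hIJ hLJ)⟩
  · rintro ⟨⟨hL, hLM⟩, hLJ⟩
    replace hLJ := hLJ hL
    refine ⟨⟨hL, fun h => hLJ (h ▸ hIJ)⟩, ?_⟩
    rcases hchain I J (I ⊔ L) hIJ le_sup_left with h | h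
    · have hlt : J < I ⊔ L := h.lt_of_ne fun h => hLJ (h ▸ le_sup_right)
      exact (sup_le (hIJ.trans hJM.le) hLM).eq_of_not_lt (hJM.2 hlt)
    · exact absurd (le_sup_right.trans h) hLJ

theorem sum_filter_sup_eq (hchain : ∀ x y z : S, x ≤ y → x ≤ z → y ≤ z ∨ z ≤ y)
    (p : S → ℕ) (hcard : ∀ L : S, ¬ IsMin L → (univ.filter (fun J : S => J ⋖ L)).card = p L)
    (μ : S → ℝ) (hμ : ∀ L J : S, J ⋖ L → μ J = μ L / p L) {I M : S} (hIM : I < M) :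
    ∑ L ∈ (univ.filter (fun L : S => IsMin L ∧ L ≠ I)).filter (I ⊔ · = M), μ L
      = μ M * (1 - (p M : ℝ)⁻¹) := by
  obtain ⟨J, hIJ, hJM⟩ := exists_le_covBy_of_lt hIM
  have hsub : leavesBelow J ⊆ leavesBelow M := fun L hL => by
    rw [mem_leavesBelow] at hL ⊢
    exact ⟨hL.1, hL.2.trans hJM.le⟩
  rw [filter_sup_eq_eq_sdiff hchain hIJ hJM, sum_sdiff_eq_sub hsub,
    sum_leavesBelow hchain p hcard μ hμ, sum_leavesBelow hchain p hcard μ hμ, hμ M J hJM]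
  ring

end DirectedTree

open DirectedTree in
theorem product_replica_matrices_diagonal_general
    {S : Type*} [Fintype S] [SemilatticeSup S]
    (K : S) (hK : ∀ x : S, x ≤ K)
    (hchain : ∀ x y z : S, x ≤ y → x ≤ z → y ≤ z ∨ z ≤ y)
    (p : S → ℕ)
    (hcard : ∀ L : S, ¬ IsMin L →
      (Finset.univ.filter (fun J : S => J ⋖ L)).card = p L)
    (μ : S → ℝ)
    (hμ : ∀ L J : S, J ⋖ L → μ J = μ L / p L)
    (T₁ T₂ : S → ℝ)
    (I : S) (hI : IsMin I) :
    ∑ L ∈ Finset.univ.filter (fun L : S => IsMin L ∧ L ≠ I),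
        μ L * T₁ (I ⊔ L) * T₂ (L ⊔ I) =
      ∑ L ∈ Finset.univ.filter (fun L : S => I < L ∧ L ≤ K),
        μ L * (1 - (p L : ℝ)⁻¹) * T₁ L * T₂ L := by
  have hmaps : ∀ L ∈ univ.filter (fun L : S => IsMin L ∧ L ≠ I),
      I ⊔ L ∈ univ.filter (fun M : S => I < M ∧ M ≤ K) := by
    intro L hL
    simp only [mem_filter, mem_univ, true_and] at hL ⊢
    refine ⟨le_sup_left.lt_of_ne fun h => hL.2 ?_, hK _⟩
    exact (h ▸ le_sup_right).antisymm (hI (h ▸ le_sup_right))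
  rw [← sum_fiberwise_of_maps_to hmaps]
  refine sum_congr rfl fun M hM => ?_
  have hfiber : ∀ L ∈ (univ.filter (fun L : S => IsMin L ∧ L ≠ I)).filter (I ⊔ · = M),
      μ L * T₁ (I ⊔ L) * T₂ (L ⊔ I) = μ L * (T₁ M * T₂ M) := fun L hL => by
    rw [sup_comm L I, (mem_filter.1 hL).2, mul_assoc]
  rw [sum_congr rfl hfiber, ← sum_mul,
    sum_filter_sup_eq hchain p hcard μ hμ (mem_filter.1 hM).2.1]
  ring

/-- In a finite directed tree `S` (finite partial order with greatest element `K`,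
binary suprema, totally ordered up-sets), where every non-minimal vertex `L`
has exactly `p L ≥ 2` children and the weight `μ` satisfies `μ K > 0` and
`μ J = μ L / p L` for every child `J` of `L`, and `T₁, T₂ : S → ℝ` are
arbitrary: for `I ∈ S_min`,
`Σ_{L ∈ S_min, L ≠ I} μ(L) T₁(sup(I,L)) T₂(sup(L,I))
  = Σ_{L : I < L ≤ K} μ(L) (1 − p_L⁻¹) T₁(L) T₂(L)`. -/
theorem product_replica_matrices_diagonal
    {S : Type*} [Fintype S] [SemilatticeSup S]
    (K : S) (hK : ∀ x : S, x ≤ K)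
    (hchain : ∀ x y z : S, x ≤ y → x ≤ z → y ≤ z ∨ z ≤ y)
    (p : S → ℕ) (hp : ∀ L : S, ¬ IsMin L → 2 ≤ p L)
    (hcard : ∀ L : S, ¬ IsMin L →
      (Finset.univ.filter (fun J : S => J ⋖ L)).card = p L)
    (μ : S → ℝ) (hμK : 0 < μ K)
    (hμ : ∀ L J : S, J ⋖ L → μ J = μ L / p L)
    (T₁ T₂ : S → ℝ)
    (I : S) (hI : IsMin I) :
    ∑ L ∈ Finset.univ.filter (fun L : S => IsMin L ∧ L ≠ I),
        μ L * T₁ (I ⊔ L) * T₂ (L ⊔ I) =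
      ∑ L ∈ Finset.univ.filter (fun L : S => I < L ∧ L ≤ K),
        μ L * (1 - (p L : ℝ)⁻¹) * T₁ L * T₂ L :=
  product_replica_matrices_diagonal_general K hK hchain p hcard μ hμ T₁ T₂ I hI
end

section
/- For the level tree S with μ(J) = m_{h(J)} and T_r(J) = t_r(h(J)) (r = 1, 2, 3) for functions t₁, t₂, t₃ : {1, …, k} → ℝ, the normalized cubic functional satisfies (1/m_k)·[Σ_{L ∈ S \ S_min} μ(L)³(1 − p_{h(L)}⁻¹)(1 − 2p_{h(L)}⁻¹)T₁(L)T₂(L)T₃(L) + Σ_{L ∈ S \ S_min} μ(L)(1 − p_{h(L)}⁻¹)·Σ_{B ∈ S \ S_min, B < L} μ(B)²(1 − p_{h(B)}⁻¹)·(T₁(L)T₂(L)T₃(B) + T₂(L)T₃(L)T₁(B) + T₃(L)T₁(L)T₂(B))] = Σ_{l=1}^{k} (m_l − m_{l−1})(m_l − 2m_{l−1})·t₁(l)t₂(l)t₃(l) + Σ_{l=1}^{k} (m_l − m_{l−1})·Σ_{b=1}^{l−1} (m_b − m_{b−1})·[t₁(l)t₂(l)t₃(b) + t₂(l)t₃(l)t₁(b)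 + t₃(l)t₁(l)t₂(b)]. -/
open scoped Classical

lemma aux_h_lt {S : Type*} [Finite S] [PartialOrder S]
    (h : S → ℕ)
    (hmin : ∀ x : S, IsMin x ↔ h x = 0)
    (hchild : ∀ L J : S, J ⋖ L → h J = h L - 1) :
    ∀ (n : ℕ) (L : S), h L = n → ∀ x : S, x < L → h x < n := by
  intro n
  induction n using Nat.strong_induction_on with
  | _ n IH =>
    intro L hL x hxL
    obtain ⟨J, hxJ, hJL⟩ := exists_le_covBy_of_lt hxL
    have hLmin : ¬ IsMin L := fun hm => hJL.lt.ne ((hm.eq_of_ge hJL.lt.le).symm)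
    have hL1 : 1 ≤ n := by
      rcases Nat.eq_zero_or_pos n with h0 | h1
      · exact absurd ((hmin L).mpr (hL.trans h0)) hLmin
      · exact h1
    have hJ : h J = n - 1 := by rw [hchild L J hJL, hL]
    rcases eq_or_lt_of_le hxJ with rfl | hxJ'
    · omega
    · have := IH (n-1) (by omega) J hJ x hxJ'
      omega

lemma aux_count {S : Type*} [Fintype S] [PartialOrder S]
    (p : ℕ → ℕ) (h : S → ℕ)
    (hchain : ∀ x y z : S, x ≤ y → x ≤ z → y ≤ z ∨ z ≤ y)
    (hmin : ∀ x : S, IsMin x ↔ h x = 0)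
    (hcard : ∀ L : S, 1 ≤ h L →
      (Finset.univ.filter (fun J : S => J ⋖ L)).card = p (h L))
    (hchild : ∀ L J : S, J ⋖ L → h J = h L - 1) :
    ∀ (n : ℕ) (L : S), h L = n → ∀ j ≤ n,
      (Finset.univ.filter (fun x : S => x ≤ L ∧ h x = j)).card
        = ∏ i ∈ Finset.Icc (j+1) n, p i := by
  intro n
  induction n using Nat.strong_induction_on with
  | _ n IH =>
    intro L hL j hj
    rcases eq_or_lt_of_le hj with rfl | hjn
    · have : Finset.univ.filter (fun x : S => x ≤ L ∧ h x = j) = {L} := by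
        ext x
        simp only [Finset.mem_filter, Finset.mem_univ, true_and, Finset.mem_singleton]
        constructor
        · rintro ⟨hxL, hx⟩
          rcases eq_or_lt_of_le hxL with rfl | hlt
          · rfl
          · exact absurd hx (by have := aux_h_lt h hmin hchild j L hL x hlt; omega)
        · rintro rfl; exact ⟨le_rfl, hL⟩
      rw [this]
      simp
    · -- j < n
      have hn1 : 1 ≤ n := by omega
      have hsplit : Finset.univ.filter (fun x : S => x ≤ L ∧ h x = j)
          = (Finset.univ.filter (fun J : S => J ⋖ L)).biUnion
              (fun J => Finset.univ.filter (fun x : S => x ≤ J ∧ h x = j)) := by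
        ext x
        simp only [Finset.mem_filter, Finset.mem_univ, true_and, Finset.mem_biUnion]
        constructor
        · rintro ⟨hxL, hx⟩
          have hxlt : x < L := by
            rcases eq_or_lt_of_le hxL with rfl | hlt
            · omega
            · exact hlt
          obtain ⟨J, hxJ, hJL⟩ := exists_le_covBy_of_lt hxlt
          exact ⟨J, by simp [hJL], hxJ, hx⟩
        · rintro ⟨J, hJ, hxJ, hx⟩
          have hJ' : J ⋖ L := by
            simpa using hJ
          exact ⟨hxJ.trans hJ'.lt.le, hx⟩
      rw [hsplit, Finset.card_biUnion]
      · have hterm : ∀ J ∈ Finset.univ.filter (fun J : S => J ⋖ L),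
            (Finset.univ.filter (fun x : S => x ≤ J ∧ h x = j)).card
              = ∏ i ∈ Finset.Icc (j+1) (n-1), p i := by
          intro J hJ
          simp only [Finset.mem_filter, Finset.mem_univ, true_and] at hJ
          have hJh : h J = n - 1 := by rw [hchild L J hJ, hL]
          exact IH (n-1) (by omega) J hJh j (by omega)
        rw [Finset.sum_congr rfl hterm, Finset.sum_const, hcard L (by omega : 1 ≤ h L), hL]
        rw [smul_eq_mul]
        have : Finset.Icc (j+1) n = Finset.Icc (j+1) (n-1+1) := by congr 1; omega
        rw [this, Finset.prod_Icc_succ_top (by omega : j+1 ≤ n-1+1)]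
        rw [show n - 1 + 1 = n by omega]
        ring
      · intro J hJ J' hJ' hne
        simp only [Finset.mem_coe, Finset.mem_filter, Finset.mem_univ, true_and] at hJ hJ'
        refine Finset.disjoint_left.mpr ?_
        intro x hx hx'
        simp only [Finset.mem_filter, Finset.mem_univ, true_and] at hx hx'
        rcases hchain x J J' hx.1 hx'.1 with hle | hle
        · exact hJ.2 (lt_of_le_of_ne hle hne) hJ'.lt
        · exact hJ'.2 (lt_of_le_of_ne hle (Ne.symm hne)) hJ.lt

lemma fiber_sum {S : Type*} (s : Finset S) (h : S → ℕ) (t : Finset ℕ)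
    (hmaps : ∀ x ∈ s, h x ∈ t) (F : ℕ → ℝ)
    (N : ℕ → ℕ) (hN : ∀ l ∈ t, (s.filter (fun x => h x = l)).card = N l) :
    ∑ x ∈ s, F (h x) = ∑ l ∈ t, (N l : ℝ) * F l := by
  rw [← Finset.sum_fiberwise_of_maps_to' hmaps F]
  exact Finset.sum_congr rfl fun l hl => by
    rw [Finset.sum_const, hN l hl, nsmul_eq_mul]

/-- For a level tree `S` with parameters `p₁, …, p_k` (each `≥ 2`, `k ≥ 1`),
height function `h`, `m₀ = 1`, `m_j = p₁⋯p_j`, weight `μ J = m (h J)`, and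
`T_r J = t_r (h J)` (`r = 1, 2, 3`) for functions `t₁, t₂, t₃` on
`{1, …, k}`: the normalized cubic functional of Lemma 5 reduces to the
standard Parisi replica symmetry breaking expression
`Σ_{l=1}^k (m_l − m_{l-1})(m_l − 2m_{l-1}) t₁(l)t₂(l)t₃(l)
  + Σ_{l=1}^k (m_l − m_{l-1}) Σ_{b=1}^{l-1} (m_b − m_{b-1})
      [t₁(l)t₂(l)t₃(b) + t₂(l)t₃(l)t₁(b) + t₃(l)t₁(l)t₂(b)]`. -/

theorem level_tree_parisi_cubic_functional
    {S : Type*} [Fintype S] [SemilatticeSup S]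
    (K : S) (hK : ∀ x : S, x ≤ K)
    (hchain : ∀ x y z : S, x ≤ y → x ≤ z → y ≤ z ∨ z ≤ y)
    (k : ℕ) (hk : 1 ≤ k)
    (p : ℕ → ℕ) (hp : ∀ j, 1 ≤ j → j ≤ k → 2 ≤ p j)
    (m : ℕ → ℕ) (hm : ∀ j, m j = ∏ i ∈ Finset.Icc 1 j, p i)
    (h : S → ℕ) (hhle : ∀ x : S, h x ≤ k) (hhK : h K = k)
    (hmin : ∀ x : S, IsMin x ↔ h x = 0)
    (hcard : ∀ L : S, 1 ≤ h L →
      (Finset.univ.filter (fun J : S => J ⋖ L)).card = p (h L))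
    (hchild : ∀ L J : S, J ⋖ L → h J = h L - 1)
    (t₁ t₂ t₃ : ℕ → ℝ) :
    (1 / (m k : ℝ)) *
        ((∑ L ∈ Finset.univ.filter (fun L : S => ¬ IsMin L),
          (m (h L) : ℝ) ^ 3 * (1 - (p (h L) : ℝ)⁻¹) *
            (1 - 2 * (p (h L) : ℝ)⁻¹) * t₁ (h L) * t₂ (h L) * t₃ (h L))
        + ∑ L ∈ Finset.univ.filter (fun L : S => ¬ IsMin L),
            (m (h L) : ℝ) * (1 - (p (h L) : ℝ)⁻¹) *
              ∑ B ∈ Finset.univ.filter (fun B : S => ¬ IsMin B ∧ B < L),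
                (m (h B) : ℝ) ^ 2 * (1 - (p (h B) : ℝ)⁻¹) *
                  (t₁ (h L) * t₂ (h L) * t₃ (h B) +
                    t₂ (h L) * t₃ (h L) * t₁ (h B) +
                    t₃ (h L) * t₁ (h L) * t₂ (h B))) =
      (∑ l ∈ Finset.Icc 1 k,
        ((m l : ℝ) - (m (l - 1) : ℝ)) * ((m l : ℝ) - 2 * (m (l - 1) : ℝ)) *
          t₁ l * t₂ l * t₃ l)
      + ∑ l ∈ Finset.Icc 1 k,
          ((m l : ℝ) - (m (l - 1) : ℝ)) *
            ∑ b ∈ Finset.Icc 1 (l - 1),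
              ((m b : ℝ) - (m (b - 1) : ℝ)) *
                (t₁ l * t₂ l * t₃ b + t₂ l * t₃ l * t₁ b +
                  t₃ l * t₁ l * t₂ b) := by
  classical
  -- positivity of p and m
  have hppos : ∀ i, 1 ≤ i → i ≤ k → 0 < p i := fun i h1 h2 =>
    lt_of_lt_of_le (by norm_num) (hp i h1 h2)
  have hmpos : ∀ j, j ≤ k → 0 < m j := by
    intro j hj
    rw [hm]
    exact Finset.prod_pos fun i hi => by
      have := Finset.mem_Icc.mp hi
      exact hppos i this.1 (this.2.trans hj)
  -- product splitting
  have key : ∀ a l : ℕ, a ≤ l → m a * ∏ i ∈ Finset.Icc (a+1) l, p i = m l := by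
    intro a l hal
    have h1 : Finset.Icc 1 a = Finset.Ioc 0 a := Finset.Icc_add_one_left_eq_Ioc 0 a
    have h2 : Finset.Icc (a+1) l = Finset.Ioc a l := Finset.Icc_add_one_left_eq_Ioc a l
    have h3 : Finset.Icc 1 l = Finset.Ioc 0 l := Finset.Icc_add_one_left_eq_Ioc 0 l
    rw [hm, hm, h1, h2, h3]
    exact Finset.prod_Ioc_consecutive p (Nat.zero_le a) hal
  have keyp : ∀ l : ℕ, 1 ≤ l → m l = m (l-1) * p l := by
    intro l hl
    have := key (l-1) l (by omega)
    rw [show Finset.Icc (l-1+1) l = {l} by rw [show l-1+1 = l by omega, Finset.Icc_self],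
      Finset.prod_singleton] at this
    omega
  -- counting vertices of each height below a vertex
  have count := aux_count p h hchain hmin hcard hchild
  -- outer fiber counts
  have countK : ∀ l ∈ Finset.Icc 1 k,
      ((Finset.univ.filter (fun L : S => ¬ IsMin L)).filter (fun L => h L = l)).card
        = ∏ i ∈ Finset.Icc (l+1) k, p i := by
    intro l hl
    rw [Finset.mem_Icc] at hl
    have hset : (Finset.univ.filter (fun L : S => ¬ IsMin L)).filter (fun L => h L = l)
        = Finset.univ.filter (fun x : S => x ≤ K ∧ h x = l) := by
      ext x
      simp only [Finset.filter_filter, Finset.mem_filter, Finset.mem_univ, true_and]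
      constructor
      · rintro ⟨_, hx⟩; exact ⟨hK x, hx⟩
      · rintro ⟨_, hx⟩
        refine ⟨fun hmn => ?_, hx⟩
        rw [hmin] at hmn; omega
    rw [hset, count k K hhK l hl.2]
  -- inner fiber counts
  have countB : ∀ L : S, ∀ b ∈ Finset.Icc 1 (h L - 1),
      ((Finset.univ.filter (fun B : S => ¬ IsMin B ∧ B < L)).filter (fun B => h B = b)).card
        = ∏ i ∈ Finset.Icc (b+1) (h L), p i := by
    intro L b hb
    rw [Finset.mem_Icc] at hb
    have hbl : b < h L := by omega
    have hset : (Finset.univ.filter (fun B : S => ¬ IsMin B ∧ B < L)).filter (fun B => h B = b)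
        = Finset.univ.filter (fun x : S => x ≤ L ∧ h x = b) := by
      ext x
      simp only [Finset.filter_filter, Finset.mem_filter, Finset.mem_univ, true_and]
      constructor
      · rintro ⟨⟨_, hxL⟩, hx⟩; exact ⟨hxL.le, hx⟩
      · rintro ⟨hxL, hx⟩
        refine ⟨⟨fun hmn => ?_, lt_of_le_of_ne hxL fun he => by subst he; omega⟩, hx⟩
        rw [hmin] at hmn; omega
    rw [hset, count (h L) L rfl b (by omega)]
  -- maps-to facts
  have hmapsK : ∀ L ∈ Finset.univ.filter (fun L : S => ¬ IsMin L), h L ∈ Finset.Icc 1 k := by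
    intro L hL
    simp only [Finset.mem_filter, Finset.mem_univ, true_and] at hL
    rw [hmin] at hL
    exact Finset.mem_Icc.mpr ⟨by omega, hhle L⟩
  have hmapsB : ∀ L : S, ∀ B ∈ Finset.univ.filter (fun B : S => ¬ IsMin B ∧ B < L),
      h B ∈ Finset.Icc 1 (h L - 1) := by
    intro L B hB
    simp only [Finset.mem_filter, Finset.mem_univ, true_and] at hB
    have h1 := (hmin B).not  -- ¬IsMin B ↔ ¬h B = 0? use directly
    have hB0 : h B ≠ 0 := fun h0 => hB.1 ((hmin B).mpr h0)
    have := aux_h_lt h hmin hchild (h L) L rfl B hB.2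
    exact Finset.mem_Icc.mpr ⟨by omega, by omega⟩
  -- rewrite first sum
  have S1 : (∑ L ∈ Finset.univ.filter (fun L : S => ¬ IsMin L),
        (m (h L) : ℝ) ^ 3 * (1 - (p (h L) : ℝ)⁻¹) *
          (1 - 2 * (p (h L) : ℝ)⁻¹) * t₁ (h L) * t₂ (h L) * t₃ (h L))
      = ∑ l ∈ Finset.Icc 1 k, ((∏ i ∈ Finset.Icc (l+1) k, p i : ℕ) : ℝ) *
          ((m l : ℝ) ^ 3 * (1 - (p l : ℝ)⁻¹) * (1 - 2 * (p l : ℝ)⁻¹) * t₁ l * t₂ l * t₃ l) :=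
    fiber_sum _ h _ hmapsK
      (fun l => (m l : ℝ) ^ 3 * (1 - (p l : ℝ)⁻¹) * (1 - 2 * (p l : ℝ)⁻¹) * t₁ l * t₂ l * t₃ l)
      _ countK
  -- rewrite second sum
  have S2 : (∑ L ∈ Finset.univ.filter (fun L : S => ¬ IsMin L),
        (m (h L) : ℝ) * (1 - (p (h L) : ℝ)⁻¹) *
          ∑ B ∈ Finset.univ.filter (fun B : S => ¬ IsMin B ∧ B < L),
            (m (h B) : ℝ) ^ 2 * (1 - (p (h B) : ℝ)⁻¹) *
              (t₁ (h L) * t₂ (h L) * t₃ (h B) +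
                t₂ (h L) * t₃ (h L) * t₁ (h B) +
                t₃ (h L) * t₁ (h L) * t₂ (h B)))
      = ∑ l ∈ Finset.Icc 1 k, ((∏ i ∈ Finset.Icc (l+1) k, p i : ℕ) : ℝ) *
          ((m l : ℝ) * (1 - (p l : ℝ)⁻¹) *
            ∑ b ∈ Finset.Icc 1 (l - 1), ((∏ i ∈ Finset.Icc (b+1) l, p i : ℕ) : ℝ) *
              ((m b : ℝ) ^ 2 * (1 - (p b : ℝ)⁻¹) *
                (t₁ l * t₂ l * t₃ b + t₂ l * t₃ l * t₁ b + t₃ l * t₁ l * t₂ b))) := by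
    have step : ∀ L ∈ Finset.univ.filter (fun L : S => ¬ IsMin L),
        (m (h L) : ℝ) * (1 - (p (h L) : ℝ)⁻¹) *
          ∑ B ∈ Finset.univ.filter (fun B : S => ¬ IsMin B ∧ B < L),
            (m (h B) : ℝ) ^ 2 * (1 - (p (h B) : ℝ)⁻¹) *
              (t₁ (h L) * t₂ (h L) * t₃ (h B) +
                t₂ (h L) * t₃ (h L) * t₁ (h B) +
                t₃ (h L) * t₁ (h L) * t₂ (h B))
        = (fun l => (m l : ℝ) * (1 - (p l : ℝ)⁻¹) *
            ∑ b ∈ Finset.Icc 1 (l - 1), ((∏ i ∈ Finset.Icc (b+1) l, p i : ℕ) : ℝ) *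
              ((m b : ℝ) ^ 2 * (1 - (p b : ℝ)⁻¹) *
                (t₁ l * t₂ l * t₃ b + t₂ l * t₃ l * t₁ b + t₃ l * t₁ l * t₂ b))) (h L) := by
      intro L hL
      dsimp only
      congr 1
      exact fiber_sum _ h _ (hmapsB L)
        (fun b => (m b : ℝ) ^ 2 * (1 - (p b : ℝ)⁻¹) *
          (t₁ (h L) * t₂ (h L) * t₃ b + t₂ (h L) * t₃ (h L) * t₁ b +
            t₃ (h L) * t₁ (h L) * t₂ b))
        (fun b => ∏ i ∈ Finset.Icc (b+1) (h L), p i) (countB L)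
    rw [Finset.sum_congr rfl step]
    exact fiber_sum _ h _ hmapsK
      (fun l => (m l : ℝ) * (1 - (p l : ℝ)⁻¹) *
        ∑ b ∈ Finset.Icc 1 (l - 1), ((∏ i ∈ Finset.Icc (b+1) l, p i : ℕ) : ℝ) *
          ((m b : ℝ) ^ 2 * (1 - (p b : ℝ)⁻¹) *
            (t₁ l * t₂ l * t₃ b + t₂ l * t₃ l * t₁ b + t₃ l * t₁ l * t₂ b)))
      (fun l => ∏ i ∈ Finset.Icc (l+1) k, p i) countK
  rw [S1, S2, mul_add, Finset.mul_sum, Finset.mul_sum]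
  congr 1
  · refine Finset.sum_congr rfl fun l hl => ?_
    rw [Finset.mem_Icc] at hl
    have hmk : ((m k : ℕ) : ℝ) = (m l : ℝ) * ((∏ i ∈ Finset.Icc (l+1) k, p i : ℕ) : ℝ) := by
      rw [← Nat.cast_mul, key l k hl.2]
    have hml0 : (m l : ℝ) ≠ 0 := Nat.cast_ne_zero.mpr (hmpos l (by omega)).ne'
    have hpl0 : (p l : ℝ) ≠ 0 := Nat.cast_ne_zero.mpr (hppos l hl.1 hl.2).ne'
    have hml1 : (m l : ℝ) = (m (l-1) : ℝ) * (p l : ℝ) := by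
      rw [← Nat.cast_mul, ← keyp l hl.1]
    have hm10 : (m (l-1) : ℝ) ≠ 0 := Nat.cast_ne_zero.mpr (hmpos (l-1) (by omega)).ne'
    set C : ℝ := ((∏ i ∈ Finset.Icc (l+1) k, p i : ℕ) : ℝ) with hCdef
    have hC0 : C ≠ 0 := by
      rw [hCdef, Nat.cast_ne_zero]
      refine (Finset.prod_pos fun i hi => ?_).ne'
      have := Finset.mem_Icc.mp hi
      exact hppos i (by omega) this.2
    rw [hmk, hml1]
    field_simp
  · refine Finset.sum_congr rfl fun l hl => ?_
    rw [Finset.mem_Icc] at hl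
    have hmk : ((m k : ℕ) : ℝ) = (m l : ℝ) * ((∏ i ∈ Finset.Icc (l+1) k, p i : ℕ) : ℝ) := by
      rw [← Nat.cast_mul, key l k hl.2]
    have hml0 : (m l : ℝ) ≠ 0 := Nat.cast_ne_zero.mpr (hmpos l (by omega)).ne'
    have hpl0 : (p l : ℝ) ≠ 0 := Nat.cast_ne_zero.mpr (hppos l hl.1 hl.2).ne'
    have hml1 : (m l : ℝ) = (m (l-1) : ℝ) * (p l : ℝ) := by
      rw [← Nat.cast_mul, ← keyp l hl.1]
    have hm10 : (m (l-1) : ℝ) ≠ 0 := Nat.cast_ne_zero.mpr (hmpos (l-1) (by omega)).ne'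
    -- rewrite inner sum
    have inner : ∀ b ∈ Finset.Icc 1 (l-1),
        ((∏ i ∈ Finset.Icc (b+1) l, p i : ℕ) : ℝ) *
          ((m b : ℝ) ^ 2 * (1 - (p b : ℝ)⁻¹) *
            (t₁ l * t₂ l * t₃ b + t₂ l * t₃ l * t₁ b + t₃ l * t₁ l * t₂ b))
        = (m l : ℝ) * (((m b : ℝ) - (m (b-1) : ℝ)) *
            (t₁ l * t₂ l * t₃ b + t₂ l * t₃ l * t₁ b + t₃ l * t₁ l * t₂ b)) := by
      intro b hb
      rw [Finset.mem_Icc] at hb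
      have hmb1 : (m b : ℝ) = (m (b-1) : ℝ) * (p b : ℝ) := by
        rw [← Nat.cast_mul, ← keyp b hb.1]
      have hpb0 : (p b : ℝ) ≠ 0 :=
        Nat.cast_ne_zero.mpr (hppos b hb.1 (by omega)).ne'
      have hmlb : (m l : ℝ) = (m b : ℝ) * ((∏ i ∈ Finset.Icc (b+1) l, p i : ℕ) : ℝ) := by
        rw [← Nat.cast_mul, key b l (by omega)]
      have hmb0 : (m b : ℝ) ≠ 0 := Nat.cast_ne_zero.mpr (hmpos b (by omega)).ne'
      set D : ℝ := ((∏ i ∈ Finset.Icc (b+1) l, p i : ℕ) : ℝ) with hDdef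
      rw [hmlb, hmb1]
      field_simp
    rw [Finset.sum_congr rfl inner, ← Finset.mul_sum]
    set C : ℝ := ((∏ i ∈ Finset.Icc (l+1) k, p i : ℕ) : ℝ) with hCdef
    have hC0 : C ≠ 0 := by
      rw [hCdef, Nat.cast_ne_zero]
      refine (Finset.prod_pos fun i hi => ?_).ne'
      have := Finset.mem_Icc.mp hi
      exact hppos i (by omega) this.2
    set Sig : ℝ := ∑ b ∈ Finset.Icc 1 (l - 1),
      ((m b : ℝ) - (m (b-1) : ℝ)) *
        (t₁ l * t₂ l * t₃ b + t₂ l * t₃ l * t₁ b + t₃ l * t₁ l * t₂ b) with hSig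
    rw [hmk, hml1]
    field_simp
end
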